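/- Let p be an odd prime and n ≥ 1, and let G = ℤ/p^nℤ. Then Q(G) = S(G) ∩ R(G); that is, every two members of S(G) ∩ R(G) mutually normalize each other. -/

import Mathlib

open Equiv Pointwise

/-- A subgroup `N ≤ Perm X` is regular if for all `x y : X` there is exactly one
element of `N` sending `x` to `y`. -/
def IsRegularSubgroup {X : Type*} (N : Subgroup (Equiv.Perm X)) : Prop :=
  ∀ x y : X, ∃! η : N, (η : Equiv.Perm X) x = y

/-- The left regular representation of an additive group `A`, `λ(g)(x) = g + x`,
as a monoid homomorphism `Multiplicative A →* Perm A`. -/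
def addLamHom (A : Type*) [AddGroup A] : Multiplicative A →* Equiv.Perm A where
  toFun a := Equiv.addLeft (Multiplicative.toAdd a)
  map_one' := by ext x; simp
  map_mul' a b := by ext x; simp [Equiv.Perm.mul_apply, add_assoc]

/-- The image `λ(A)` of the left regular representation. -/
def lamA (A : Type*) [AddGroup A] : Subgroup (Equiv.Perm A) := (addLamHom A).range

/-- The holomorph `Hol(A) = Norm_B(λ(A))` of an additive group `A`. -/
def HolA (A : Type*) [AddGroup A] : Subgroup (Equiv.Perm A) := Subgroup.normalizer (lamA A : Set (Equiv.Perm A))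

/-- `S(G)` for `G = ℤ/pⁿℤ`: regular subgroups isomorphic to `G` inside `Hol(G)`. -/
def SA (p n : ℕ) : Set (Subgroup (Equiv.Perm (ZMod (p ^ n)))) :=
  {N | IsRegularSubgroup N ∧ Nonempty (N ≃* Multiplicative (ZMod (p ^ n))) ∧
    N ≤ HolA (ZMod (p ^ n))}

/-- `R(G)` for `G = ℤ/pⁿℤ`: regular subgroups isomorphic to `G` normalized by `λ(G)`. -/
def RA (p n : ℕ) : Set (Subgroup (Equiv.Perm (ZMod (p ^ n)))) :=
  {N | IsRegularSubgroup N ∧ Nonempty (N ≃* Multiplicative (ZMod (p ^ n))) ∧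
    lamA (ZMod (p ^ n)) ≤ Subgroup.normalizer (N : Set (Equiv.Perm (ZMod (p ^ n))))}

/-- `Q(G)` for `G = ℤ/pⁿℤ`. -/
def QA (p n : ℕ) : Set (Subgroup (Equiv.Perm (ZMod (p ^ n)))) :=
  {M ∈ SA p n ∩ RA p n | ∀ N ∈ SA p n ∩ RA p n, N ≤ Subgroup.normalizer (M : Set (Equiv.Perm (ZMod (p ^ n))))}

section Auxiliary

lemma addLeft_mem_lamA {A : Type*} [AddGroup A] (c : A) :
    Equiv.addLeft c ∈ lamA A := ⟨Multiplicative.ofAdd c, rfl⟩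

lemma addLamHom_apply {A : Type*} [AddGroup A] (a : Multiplicative A) (x : A) :
    (addLamHom A a) x = Multiplicative.toAdd a + x := rfl

variable {m : ℕ}

/-- Every element of the holomorph of `ZMod m` is affine: `η x = a + u * x`. -/
lemma affine_of_mem_HolA [NeZero m] {η : Equiv.Perm (ZMod m)} (hη : η ∈ HolA (ZMod m)) :
    ∃ a u : ZMod m, ∀ x, η x = a + u * x := by
  have key : ∀ c : ZMod m, ∀ x, η (c + η.symm x) = η c - η 0 + x := by
    intro c x
    have h1 : η * (Equiv.addLeft c) * η⁻¹ ∈ lamA (ZMod m) :=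
      ((Subgroup.mem_normalizer_iff.mp (show η ∈ Subgroup.normalizer (lamA (ZMod m) : Set (Equiv.Perm (ZMod m))) from hη)) _).mp (addLeft_mem_lamA c)
    obtain ⟨d, hd⟩ := h1
    have hde : ∀ y, Multiplicative.toAdd d + y = η (c + η.symm y) := by
      intro y
      have h2 := congrFun (congrArg (fun (f : Equiv.Perm (ZMod m)) => (f : ZMod m → ZMod m)) hd) y
      simpa [addLamHom_apply, Equiv.Perm.mul_apply, Equiv.Perm.inv_def] using h2
    have h0 := hde (η 0)
    rw [Equiv.symm_apply_apply, add_zero] at h0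
    have hx := hde x
    rw [← hx, ← h0]
    ring
  have hadd : ∀ c d : ZMod m, η (c + d) - η 0 = (η c - η 0) + (η d - η 0) := by
    intro c d
    have h := key c (η d)
    rw [Equiv.symm_apply_apply] at h
    rw [h]; ring
  have hnat : ∀ k : ℕ, η ((k : ZMod m)) - η 0 = (k : ZMod m) * (η 1 - η 0) := by
    intro k
    induction k with
    | zero => simp
    | succ k ih =>
      have hc : ((k + 1 : ℕ) : ZMod m) = (k : ZMod m) + 1 := by push_cast; ring
      rw [hc, hadd, ih]; ring
  refine ⟨η 0, η 1 - η 0, fun x => ?_⟩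
  obtain ⟨k, rfl⟩ := ZMod.natCast_zmod_surjective (n := m) x
  linear_combination hnat k

/-- The commutator of an element `μ = (b, v)` of a `λ(G)`-normalized subgroup `P`
with a translation lies in `P`: `λ((v-1)c) ∈ P`. -/
lemma addLeft_sub_one_mul_mem {P : Subgroup (Equiv.Perm (ZMod m))}
    (hP : lamA (ZMod m) ≤ Subgroup.normalizer (P : Set (Equiv.Perm (ZMod m)))) {μ : Equiv.Perm (ZMod m)} (hμ : μ ∈ P)
    {b v : ZMod m} (hbv : ∀ x, μ x = b + v * x) (c : ZMod m) :
    Equiv.addLeft ((v - 1) * c) ∈ P := by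
  have hg : Equiv.addLeft c ∈ Subgroup.normalizer (P : Set (Equiv.Perm (ZMod m))) := hP (addLeft_mem_lamA c)
  have h1 : (Equiv.addLeft c) * μ⁻¹ * (Equiv.addLeft c)⁻¹ ∈ P :=
    ((Subgroup.mem_normalizer_iff.mp hg) _).mp (inv_mem hμ)
  have h2 : μ * ((Equiv.addLeft c) * μ⁻¹ * (Equiv.addLeft c)⁻¹) ∈ P := mul_mem hμ h1
  have hkey : μ * Equiv.addLeft c = Equiv.addLeft ((v - 1) * c) * (Equiv.addLeft c * μ) := by
    ext x
    simp only [Equiv.Perm.mul_apply, Equiv.coe_addLeft, hbv]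
    ring
  have he : μ * ((Equiv.addLeft c) * μ⁻¹ * (Equiv.addLeft c)⁻¹) =
      Equiv.addLeft ((v - 1) * c) := by
    have : μ * ((Equiv.addLeft c) * μ⁻¹ * (Equiv.addLeft c)⁻¹) =
        (μ * Equiv.addLeft c) * μ⁻¹ * (Equiv.addLeft c)⁻¹ := by group
    rw [this, hkey]
    group
  rwa [he] at h2

/-- A regular commutative subgroup of `Perm (ZMod m)` contains every permutation
commuting with all of its elements. -/
lemma mem_of_commute_regular {P : Subgroup (Equiv.Perm (ZMod m))}
    (hreg : IsRegularSubgroup P) (hcomm : ∀ x y : P, x * y = y * x)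
    {η : Equiv.Perm (ZMod m)} (hη : ∀ μ ∈ P, η * μ = μ * η) : η ∈ P := by
  obtain ⟨μc, hμc, -⟩ := hreg 0 (η 0)
  have : η = (μc : Equiv.Perm (ZMod m)) := by
    ext x
    obtain ⟨μ, hμ, -⟩ := hreg 0 x
    have hcm : (μ : Equiv.Perm (ZMod m)) * μc = (μc : Equiv.Perm (ZMod m)) * μ := by
      have := hcomm μ μc
      exact congrArg Subtype.val this
    calc η x = η ((μ : Equiv.Perm (ZMod m)) 0) := by rw [hμ]
    _ = ((η * (μ : Equiv.Perm (ZMod m))) : Equiv.Perm (ZMod m)) 0 := rfl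
    _ = (((μ : Equiv.Perm (ZMod m)) * η) : Equiv.Perm (ZMod m)) 0 := by rw [hη μ μ.2]
    _ = (μ : Equiv.Perm (ZMod m)) (η 0) := rfl
    _ = (μ : Equiv.Perm (ZMod m)) ((μc : Equiv.Perm (ZMod m)) 0) := by rw [hμc]
    _ = (((μ : Equiv.Perm (ZMod m)) * μc) : Equiv.Perm (ZMod m)) 0 := rfl
    _ = (((μc : Equiv.Perm (ZMod m)) * μ) : Equiv.Perm (ZMod m)) 0 := by rw [hcm]
    _ = (μc : Equiv.Perm (ZMod m)) ((μ : Equiv.Perm (ZMod m)) 0) := rfl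
    _ = (μc : Equiv.Perm (ZMod m)) x := by rw [hμ]
  rw [this]; exact μc.2

/-- In `ZMod (p ^ n)`, two square-zero elements multiply to zero. -/
lemma mul_eq_zero_of_sq_eq_zero {p n : ℕ} (hp : p.Prime) {x y : ZMod (p ^ n)}
    (hx : x * x = 0) (hy : y * y = 0) : x * y = 0 := by
  haveI : NeZero (p ^ n) := ⟨pow_ne_zero n hp.ne_zero⟩
  obtain ⟨a, rfl⟩ := ZMod.natCast_zmod_surjective (n := p ^ n) x
  obtain ⟨b, rfl⟩ := ZMod.natCast_zmod_surjective (n := p ^ n) y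
  rw [← Nat.cast_mul, ZMod.natCast_eq_zero_iff] at hx hy ⊢
  rcases eq_or_ne a 0 with rfl | ha
  · simp
  rcases eq_or_ne b 0 with rfl | hb
  · simp
  rw [Nat.Prime.pow_dvd_iff_le_factorization hp (mul_ne_zero ha ha),
    Nat.factorization_mul ha ha] at hx
  rw [Nat.Prime.pow_dvd_iff_le_factorization hp (mul_ne_zero hb hb),
    Nat.factorization_mul hb hb] at hy
  rw [Nat.Prime.pow_dvd_iff_le_factorization hp (mul_ne_zero ha hb),
    Nat.factorization_mul ha hb]
  simp only [Finsupp.add_apply] at hx hy ⊢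
  omega

/-- For a commutative, `λ(G)`-normalized subgroup, the linear coefficient `u` of
any element satisfies `(u - 1)² = 0`. -/
lemma sq_eq_zero_of_mem [NeZero m] {P : Subgroup (Equiv.Perm (ZMod m))}
    (hcomm : ∀ x y : P, x * y = y * x) (hP : lamA (ZMod m) ≤ Subgroup.normalizer (P : Set (Equiv.Perm (ZMod m))))
    {ν : Equiv.Perm (ZMod m)} (hν : ν ∈ P) {a u : ZMod m} (hau : ∀ x, ν x = a + u * x) :
    (u - 1) * (u - 1) = 0 := by
  have h1 : Equiv.addLeft ((u - 1) * 1) ∈ P := addLeft_sub_one_mul_mem hP hν hau 1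
  have h2 : Equiv.addLeft ((u - 1) * 1) * ν = ν * Equiv.addLeft ((u - 1) * 1) := by
    exact congrArg Subtype.val (hcomm ⟨_, h1⟩ ⟨ν, hν⟩)
  have h3 := congrFun (congrArg (fun (f : Equiv.Perm (ZMod m)) => (f : ZMod m → ZMod m)) h2) 0
  simp only [Equiv.Perm.mul_apply, Equiv.coe_addLeft, hau] at h3
  linear_combination -h3

end Auxiliary

lemma comm_of_iso {P : Subgroup (Equiv.Perm (ZMod m))} {H : Type*} [CommGroup H]
    (e : P ≃* H) : ∀ x y : P, x * y = y * x := by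
  intro x y
  apply e.injective
  rw [map_mul, map_mul, mul_comm]

/-- The key conjugation lemma: members of `S ∩ R` mutually normalize each other. -/
lemma conj_mem_of_mem {p n : ℕ} (hp : p.Prime)
    {N M : Subgroup (Equiv.Perm (ZMod (p ^ n)))}
    (hN : N ∈ SA p n ∩ RA p n) (hM : M ∈ SA p n ∩ RA p n)
    {ν μ : Equiv.Perm (ZMod (p ^ n))} (hν : ν ∈ N) (hμ : μ ∈ M) :
    ν * μ * ν⁻¹ ∈ M := by
  haveI : NeZero (p ^ n) := ⟨pow_ne_zero n hp.ne_zero⟩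
  obtain ⟨⟨hNreg, ⟨eN⟩, hNhol⟩, ⟨-, -, hNnorm⟩⟩ := hN
  obtain ⟨⟨hMreg, ⟨eM⟩, hMhol⟩, ⟨-, -, hMnorm⟩⟩ := hM
  have hNcomm := comm_of_iso eN
  have hMcomm := comm_of_iso eM
  obtain ⟨a, u, hau⟩ := affine_of_mem_HolA (hNhol hν)
  obtain ⟨b, v, hbv⟩ := affine_of_mem_HolA (hMhol hμ)
  have hu2 : (u - 1) * (u - 1) = 0 := sq_eq_zero_of_mem hNcomm hNnorm hν hau
  -- the translation λ((u-1)b) commutes with everything in M, hence lies in M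
  have hz : Equiv.addLeft ((u - 1) * b) ∈ M := by
    apply mem_of_commute_regular hMreg hMcomm
    intro μ' hμ'
    obtain ⟨b', v', hbv'⟩ := affine_of_mem_HolA (hMhol hμ')
    have hv2 : (v' - 1) * (v' - 1) = 0 := sq_eq_zero_of_mem hMcomm hMnorm hμ' hbv'
    have h3 : (u - 1) * (v' - 1) = 0 := mul_eq_zero_of_sq_eq_zero hp hu2 hv2
    ext x
    simp only [Equiv.Perm.mul_apply, Equiv.coe_addLeft, hbv']
    linear_combination -b * h3
  have hz2 : Equiv.addLeft ((1 - v) * a) ∈ M := by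
    have h := addLeft_sub_one_mul_mem hMnorm hμ hbv (-a)
    have : (v - 1) * (-a) = (1 - v) * a := by ring
    rwa [this] at h
  have hw : ν * μ * ν⁻¹ =
      Equiv.addLeft ((u - 1) * b) * Equiv.addLeft ((1 - v) * a) * μ := by
    have hperm : ν * μ =
        (Equiv.addLeft ((u - 1) * b) * Equiv.addLeft ((1 - v) * a) * μ) * ν := by
      ext x
      simp only [Equiv.Perm.mul_apply, Equiv.coe_addLeft, hau, hbv]
      ring
    calc ν * μ * ν⁻¹
        = ((Equiv.addLeft ((u - 1) * b) * Equiv.addLeft ((1 - v) * a) * μ) * ν) * ν⁻¹ := by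
          rw [hperm]
    _ = Equiv.addLeft ((u - 1) * b) * Equiv.addLeft ((1 - v) * a) * μ := by group
  rw [hw]
  exact mul_mem (mul_mem hz hz2) hμ

/-- For `p` an odd prime and `G = ℤ/pⁿℤ`, `Q(G) = S(G) ∩ R(G)`:
all members of `S(G) ∩ R(G)` mutually normalize each other. -/
theorem QA_eq_SA_inter_RA (p n : ℕ) (hp : p.Prime) (hodd : Odd p) (hn : 1 ≤ n) :
    QA p n = SA p n ∩ RA p n := by
  ext M
  simp only [QA, Set.mem_setOf_eq, Set.mem_sep_iff]
  constructor
  · exact fun h => h.1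
  · intro hM
    refine ⟨hM, fun N hN ν hν => ?_⟩
    rw [Subgroup.mem_normalizer_iff]
    intro h
    constructor
    · exact fun hh => conj_mem_of_mem hp hN hM hν hh
    · intro hh
      have h2 := conj_mem_of_mem hp hN hM (inv_mem hν) hh
      have h3 : ν⁻¹ * (ν * h * ν⁻¹) * ν⁻¹⁻¹ = h := by group
      rwa [h3] at h2
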